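/- Let γ₁, γ₂, γ₃ be three roots of a root system Φ spanning a rank-3 subsystem Ψ with the property: whenever η = n₁γ₁ + n₂γ₂ + n₃γ₃ ∈ Ψ, then η − n₃γ₃ is proportional to a root of Φ. Then for any root η of Φ lying in Ψ, the intersection of the ℂ-spans ⟨γ₁,γ₂⟩_ℂ ∩ ⟨γ₃,η⟩_ℂ is either {0} or is spanned by a root. -/
import Mathlib


/- STATEMENT 11: Let γ₁, γ₂, γ₃ be roots of a root system Φ spanning a rank-3 subsystem
Ψ = Φ ∩ span{γ₁,γ₂,γ₃}, with the property that whenever η = n₁γ₁ + n₂γ₂ + n₃γ₃ ∈ Ψ (with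
integer coefficients), η − n₃γ₃ is proportional to a root of Φ (or zero).  Then for any
root η ∈ Ψ, the intersection ⟨γ₁,γ₂⟩_ℂ ∩ ⟨γ₃,η⟩_ℂ is {0} or spanned by a root.  We work
inside the complexification: V is a ℂ-vector space containing the finite set of roots Φ. -/

theorem span_intersection_of_rank_three_subsystem
    {V : Type*} [AddCommGroup V] [Module ℂ V]
    (Φ : Finset V) (hΦ0 : (0 : V) ∉ Φ)
    (γ₁ γ₂ γ₃ : V) (h1 : γ₁ ∈ Φ) (h2 : γ₂ ∈ Φ) (h3 : γ₃ ∈ Φ)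
    (hindep : LinearIndependent ℂ ![γ₁, γ₂, γ₃])
    -- Ψ = Φ ∩ span{γ₁,γ₂,γ₃}; every root of Ψ is an integral combination of γ₁,γ₂,γ₃
    (hint : ∀ ρ ∈ Φ, ρ ∈ Submodule.span ℂ {γ₁, γ₂, γ₃} →
      ∃ n₁ n₂ n₃ : ℤ, ρ = n₁ • γ₁ + n₂ • γ₂ + n₃ • γ₃)
    -- the hypothesis: for η = n₁γ₁+n₂γ₂+n₃γ₃ in Ψ, η − n₃γ₃ is proportional to a root
    (hprop : ∀ ρ ∈ Φ, ∀ n₁ n₂ n₃ : ℤ, ρ = n₁ • γ₁ + n₂ • γ₂ + n₃ • γ₃ →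
      (n₁ • γ₁ + n₂ • γ₂ = 0) ∨ ∃ (c : ℂ) (σ : V), σ ∈ Φ ∧ c ≠ 0 ∧
        n₁ • γ₁ + n₂ • γ₂ = c • σ) :
    ∀ η ∈ Φ, η ∈ Submodule.span ℂ {γ₁, γ₂, γ₃} →
      (Submodule.span ℂ {γ₁, γ₂} ⊓ Submodule.span ℂ {γ₃, η} = ⊥) ∨
      (∃ ρ ∈ Φ, Submodule.span ℂ {γ₁, γ₂} ⊓ Submodule.span ℂ {γ₃, η}
        = Submodule.span ℂ {ρ}) := by
  intro η hη hspan
  obtain ⟨n₁, n₂, n₃, hη'⟩ := hint η hη hspan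
  have hLI := Fintype.linearIndependent_iff.mp hindep
  have zc : ∀ (n : ℤ) (v : V), n • v = ((n : ℂ)) • v := fun n v =>
    (Int.cast_smul_eq_zsmul ℂ n v).symm
  rcases hprop η hη n₁ n₂ n₃ hη' with h0 | ⟨c, σ, hσΦ, hc, hcs⟩
  · -- n₁ = n₂ = 0, so η = n₃ • γ₃ and the intersection is trivial
    left
    have h12 := hLI ![(n₁ : ℂ), (n₂ : ℂ), 0] (by
      rw [Fin.sum_univ_three]
      simpa [zc] using h0)
    have hn1 : (n₁ : ℂ) = 0 := h12 0
    have hn2 : (n₂ : ℂ) = 0 := h12 1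
    have hη3 : η = (n₃ : ℂ) • γ₃ := by
      rw [hη', zc, zc, zc, hn1, hn2]; simp
    ext x
    simp only [Submodule.mem_inf, Submodule.mem_bot]
    constructor
    · rintro ⟨hx1, hx2⟩
      obtain ⟨a, b, hab⟩ := Submodule.mem_span_pair.mp hx1
      obtain ⟨d, e, hde⟩ := Submodule.mem_span_pair.mp hx2
      have hsum := hLI ![a, b, -(d + e * n₃)] (by
        rw [Fin.sum_univ_three]
        have : d • γ₃ + e • η = (d + e * n₃) • γ₃ := by
          rw [hη3, smul_smul, add_smul]
        simp only [Matrix.cons_val_zero, Matrix.cons_val_one, Matrix.head_cons,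
          Matrix.cons_val_two, Matrix.tail_cons, neg_smul]
        rw [hab, ← this, hde]
        abel)
      have ha : a = 0 := hsum 0
      have hb : b = 0 := hsum 1
      rw [← hab, ha, hb]; simp
    · rintro rfl; exact ⟨Submodule.zero_mem _, Submodule.zero_mem _⟩
  · -- intersection is spanned by σ
    right
    refine ⟨σ, hσΦ, ?_⟩
    have hcsC : (n₁ : ℂ) • γ₁ + (n₂ : ℂ) • γ₂ = c • σ := by rw [← zc, ← zc]; exact hcs
    apply le_antisymm
    · rintro x hx
      rw [Submodule.mem_inf] at hx
      obtain ⟨a, b, hab⟩ := Submodule.mem_span_pair.mp hx.1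
      obtain ⟨d, e, hde⟩ := Submodule.mem_span_pair.mp hx.2
      have hηC : η = (n₁ : ℂ) • γ₁ + (n₂ : ℂ) • γ₂ + (n₃ : ℂ) • γ₃ := by
        rw [hη', zc, zc, zc]
      have hsum := hLI ![a - e * n₁, b - e * n₂, -(d + e * n₃)] (by
        rw [Fin.sum_univ_three]
        simp only [Matrix.cons_val_zero, Matrix.cons_val_one, Matrix.head_cons,
          Matrix.cons_val_two, Matrix.tail_cons, neg_smul, sub_smul, add_smul, mul_smul]
        have he : e • η = e • ((n₁ : ℂ) • γ₁) + e • ((n₂ : ℂ) • γ₂) + e • ((n₃ : ℂ) • γ₃) := by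
          rw [hηC]; module
        have : a • γ₁ + b • γ₂ - (d • γ₃ + e • η) = 0 := by rw [hab, hde]; simp
        rw [he] at this
        linear_combination (norm := module) this)
      have ha : a = e * n₁ := by have := hsum 0; simp at this; exact sub_eq_zero.mp this
      have hb : b = e * n₂ := by have := hsum 1; simp at this; exact sub_eq_zero.mp this
      rw [Submodule.mem_span_singleton]
      refine ⟨e * c, ?_⟩
      rw [← hab, ha, hb, mul_smul, ← hcsC]
      module
    · rw [Submodule.span_le, Set.singleton_subset_iff]
      have hσ : σ = c⁻¹ • ((n₁ : ℂ) • γ₁ + (n₂ : ℂ) • γ₂) := by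
        rw [hcsC, smul_smul, inv_mul_cancel₀ hc, one_smul]
      constructor
      · rw [hσ]
        exact Submodule.smul_mem _ _ (Submodule.add_mem _
          (Submodule.smul_mem _ _ (Submodule.subset_span (by simp)))
          (Submodule.smul_mem _ _ (Submodule.subset_span (by simp))))
      · have hσ' : σ = c⁻¹ • ((1 : ℂ) • η + (-(n₃ : ℂ)) • γ₃) := by
          rw [hσ]
          congr 1
          have hηC : η = (n₁ : ℂ) • γ₁ + (n₂ : ℂ) • γ₂ + (n₃ : ℂ) • γ₃ := by
            rw [hη', zc, zc, zc]
          rw [hηC]; module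
        rw [hσ']
        exact Submodule.smul_mem _ _ (Submodule.add_mem _
          (Submodule.smul_mem _ _ (Submodule.subset_span (by simp)))
          (Submodule.smul_mem _ _ (Submodule.subset_span (by simp))))
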